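/- Let V be a finite-dimensional real vector space, K ⊆ V a salient closed convex cone, and suppose D₁, …, D_m ∈ K and C₁, …, C_m are linear functionals on V such that for each i: Cᵢ(Dᵢ) < 0, Cᵢ(Dⱼ) = 0 for all j ≠ i, and Cᵢ(x) ≥ 0 for every x ∈ K not lying in the cone generated by D₁, …, D_m. Then the cone generated by D₁, …, D_m is extremal in K: whenever x + y lies in this cone with x, y ∈ K, both x and y lie in it. -/

import Mathlib

open Finset

/-- The convex cone generated by finitely many vectors `D₁, …, Dₘ`: all finite
nonnegative combinations. -/
def finConeGen {V : Type*} [AddCommGroup V] [Module ℝ V] {m : ℕ} (D : Fin m → V) :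
    Set V :=
  {x | ∃ t : Fin m → ℝ, (∀ i, 0 ≤ t i) ∧ x = ∑ i, t i • D i}

/-- (Rulla's Lemma 1.4.6, abstract form.)  Let `K` be a salient closed convex cone in a
finite-dimensional real vector space, `D₁, …, Dₘ ∈ K`, and `C₁, …, Cₘ` linear functionals
such that `Cᵢ(Dᵢ) < 0`, `Cᵢ(Dⱼ) = 0` for `j ≠ i`, and `Cᵢ ≥ 0` on every element of `K`
not lying in the cone generated by the `Dⱼ`.  Then the cone generated by `D₁, …, Dₘ` is
extremal in `K`: if `x + y` lies in it with `x, y ∈ K`, then so do `x` and `y`. -/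
theorem finitely_generated_cone_extremal
    {V : Type*} [NormedAddCommGroup V] [NormedSpace ℝ V] [FiniteDimensional ℝ V]
    (K : ConvexCone ℝ V) (hKclosed : IsClosed (K : Set V))
    (hKsalient : ∀ x ∈ K, x ≠ 0 → -x ∉ K)
    (m : ℕ) (D : Fin m → V) (hD : ∀ i, D i ∈ K)
    (C : Fin m → (V →ₗ[ℝ] ℝ))
    (hneg : ∀ i, C i (D i) < 0)
    (hzero : ∀ i j, j ≠ i → C i (D j) = 0)
    (hnonneg : ∀ i, ∀ x ∈ K, x ∉ finConeGen D → 0 ≤ C i x) :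
    ∀ x y : V, x ∈ K → y ∈ K → x + y ∈ finConeGen D →
      x ∈ finConeGen D ∧ y ∈ finConeGen D := by
  have hzero_mem : (0 : V) ∈ finConeGen D := ⟨0, fun i => le_refl 0, by simp⟩
  -- evaluation of C i on a combination
  have hCval : ∀ (i : Fin m) (t : Fin m → ℝ),
      C i (∑ j, t j • D j) = t i * C i (D i) := by
    intro i t
    rw [map_sum]
    rw [Finset.sum_eq_single i (fun j _ hj => by
      rw [map_smul, smul_eq_mul, hzero i j hj, mul_zero])
      (fun h => absurd (mem_univ i) h)]
    rw [map_smul, smul_eq_mul]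
  -- nonzero elements of the cone lie in K
  have hconeK : ∀ z ∈ finConeGen D, z ≠ 0 → z ∈ K := by
    rintro z ⟨t, ht, rfl⟩ hz
    have main : ∀ s : Finset (Fin m),
        (∑ i ∈ s, t i • D i = 0) ∨ (∑ i ∈ s, t i • D i) ∈ K := by
      intro s
      induction s using Finset.induction with
      | empty => simp
      | insert a s hnotmem ih =>
        rw [Finset.sum_insert hnotmem]
        rcases eq_or_lt_of_le (ht a) with h0 | hpos
        · rcases ih with h | h
          · left; rw [h, ← h0]; simp
          · right; rw [← h0]; simpa using h
        · have haK : t a • D a ∈ K := K.smul_mem hpos (hD a)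
          rcases ih with h | h
          · right; rw [h, add_zero]; exact haK
          · right; exact K.add_mem haK h
    rcases main Finset.univ with h | h
    · exact absurd h hz
    · exact h
  have key : ∀ x y : V, x ∈ K → y ∈ K → x + y ∈ finConeGen D → x ∈ finConeGen D := by
    intro x y hx hy hxy
    obtain ⟨t, ht, hsum⟩ := hxy
    by_contra hxc
    have hxne : x ≠ 0 := fun h => hxc (h ▸ hzero_mem)
    have hCx : ∀ i, 0 ≤ C i x := fun i => hnonneg i x hx hxc
    by_cases hyc : y ∈ finConeGen D
    · obtain ⟨u, hu, hysum⟩ := hyc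
      have hx_eq : x = ∑ i, (t i - u i) • D i := by
        have hx' : x = (x + y) - y := by abel
        rw [hx', hsum, hysum, ← Finset.sum_sub_distrib]
        simp [sub_smul]
      have hcoef : ∀ i, t i - u i ≤ 0 := by
        intro i
        have h1 : C i x = (t i - u i) * C i (D i) := by rw [hx_eq, hCval]
        have h2 := hCx i
        rw [h1] at h2
        nlinarith [hneg i]
      have hnegx : -x ∈ finConeGen D := by
        refine ⟨fun i => u i - t i, fun i => by dsimp only; linarith [hcoef i], ?_⟩
        rw [hx_eq, ← Finset.sum_neg_distrib]
        refine Finset.sum_congr rfl fun i _ => ?_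
        rw [← neg_smul]; ring_nf
      have hnegxK : -x ∈ K := hconeK _ hnegx (by simpa using hxne)
      exact hKsalient x hx hxne hnegxK
    · have hCy : ∀ i, 0 ≤ C i y := fun i => hnonneg i y hy hyc
      have ht0 : ∀ i, t i = 0 := by
        intro i
        have h1 : C i (x + y) = t i * C i (D i) := by rw [hsum, hCval]
        have h2 : 0 ≤ t i * C i (D i) := by
          rw [← h1, map_add]; linarith [hCx i, hCy i]
        nlinarith [hneg i, ht i]
      have hsum0 : x + y = 0 := by
        rw [hsum]; simp [ht0]
      exact hKsalient x hx hxne ((neg_eq_of_add_eq_zero_right hsum0) ▸ hy)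
  intro x y hx hy hxy
  exact ⟨key x y hx hy hxy, key y x hy hx (by rwa [add_comm])⟩
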